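/- Let (X_n)_{n≥0} be i.i.d. nonnegative random variables with finite mean, and define Y := sup_{n≥0} (X_n - n). Then Y is integrable if and only if X_0 has finite second moment, i.e., E[X_0^2] < ∞. -/

import Mathlib

open MeasureTheory ProbabilityTheory Set ENNReal Filter

lemma pw_upper (x : ℝ) (hx : 0 ≤ x) (F : Finset ℕ) :
    ∑ n ∈ F, max (x - n) 0 ≤ x ^ 2 + x := by
  have h1 : ∑ n ∈ F, max (x - n) 0
      = ∑ n ∈ F.filter (fun n : ℕ => (n : ℝ) < x), max (x - n) 0 := by
    refine (Finset.sum_subset (Finset.filter_subset _ _) ?_).symm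
    intro n hn hn'
    simp only [Finset.mem_filter, not_and, not_lt] at hn'
    exact max_eq_right (sub_nonpos.2 (hn' hn))
  have h2 : F.filter (fun n : ℕ => (n : ℝ) < x) ⊆ Finset.range (⌊x⌋₊ + 1) := by
    intro n hn
    simp only [Finset.mem_filter] at hn
    simp only [Finset.mem_range, Nat.lt_succ_iff]
    exact Nat.le_floor hn.2.le
  have h3 : ∑ n ∈ F.filter (fun n : ℕ => (n : ℝ) < x), max (x - n) 0
      ≤ ∑ n ∈ Finset.range (⌊x⌋₊ + 1), max (x - n) 0 :=
    Finset.sum_le_sum_of_subset_of_nonneg h2 (fun _ _ _ => le_max_right _ _)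
  have h4 : ∑ n ∈ Finset.range (⌊x⌋₊ + 1), max (x - n) 0 ≤ (⌊x⌋₊ + 1 : ℝ) * x := by
    calc ∑ n ∈ Finset.range (⌊x⌋₊ + 1), max (x - n) 0
        ≤ ∑ _n ∈ Finset.range (⌊x⌋₊ + 1), x := by
          refine Finset.sum_le_sum fun n _ => max_le ?_ hx
          have : (0:ℝ) ≤ n := Nat.cast_nonneg n
          linarith
      _ = (⌊x⌋₊ + 1 : ℝ) * x := by
          rw [Finset.sum_const, Finset.card_range]; push_cast; ring
  have h5 : (⌊x⌋₊ : ℝ) ≤ x := Nat.floor_le hx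
  nlinarith [h1, h3, h4]

lemma pw_lower (x : ℝ) (hx : 0 ≤ x) :
    x ^ 2 / 2 ≤ ∑ n ∈ Finset.range (⌊x⌋₊ + 1), max (x - n) 0 := by
  have h5 : (⌊x⌋₊ : ℝ) ≤ x := Nat.floor_le hx
  have h6 : x < ⌊x⌋₊ + 1 := Nat.lt_floor_add_one x
  have h0 : ∀ n ∈ Finset.range (⌊x⌋₊ + 1), max (x - n) 0 = x - n := by
    intro n hn
    simp only [Finset.mem_range, Nat.lt_succ_iff] at hn
    have : (n : ℝ) ≤ x := le_trans (by exact_mod_cast hn) h5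
    exact max_eq_left (by linarith)
  rw [Finset.sum_congr rfl h0, Finset.sum_sub_distrib, Finset.sum_const,
    Finset.card_range]
  have hgauss : (∑ n ∈ Finset.range (⌊x⌋₊ + 1), (n : ℝ)) * 2 = (⌊x⌋₊ : ℝ) * (⌊x⌋₊ + 1) := by
    have h := Finset.sum_range_id_mul_two (⌊x⌋₊ + 1)
    have : ((∑ i ∈ Finset.range (⌊x⌋₊ + 1), i) * 2 : ℕ) = ((⌊x⌋₊ + 1) * ⌊x⌋₊ : ℕ) := by
      simpa using h
    have := congrArg (fun n : ℕ => (n : ℝ)) this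
    push_cast at this
    linarith
  rw [nsmul_eq_mul]
  set k : ℝ := (⌊x⌋₊ : ℝ)
  have hk0 : 0 ≤ k := Nat.cast_nonneg _
  push_cast
  nlinarith [mul_nonneg (sub_nonneg.2 h5) (by linarith : (0:ℝ) ≤ k + 1 - x)]

lemma ofReal_eq_ofReal_max (a : ℝ) : ENNReal.ofReal a = ENNReal.ofReal (max a 0) := by
  rcases le_total a 0 with h | h
  · rw [ENNReal.ofReal_eq_zero.2 h, max_eq_right h, ENNReal.ofReal_zero]
  · rw [max_eq_left h]

lemma enn_upper (x : ℝ) (hx : 0 ≤ x) :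
    ∑' n : ℕ, ENNReal.ofReal (x - n) ≤ ENNReal.ofReal (x ^ 2) + ENNReal.ofReal x := by
  rw [ENNReal.tsum_eq_iSup_sum]
  refine iSup_le fun F => ?_
  have h1 : ∑ n ∈ F, ENNReal.ofReal (x - n) = ENNReal.ofReal (∑ n ∈ F, max (x - n) 0) := by
    rw [ENNReal.ofReal_sum_of_nonneg (fun _ _ => le_max_right _ _)]
    exact Finset.sum_congr rfl fun n _ => ofReal_eq_ofReal_max _
  rw [h1, ← ENNReal.ofReal_add (by positivity) hx]
  exact ENNReal.ofReal_le_ofReal (pw_upper x hx F)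

lemma enn_lower (x : ℝ) (hx : 0 ≤ x) :
    ENNReal.ofReal (x ^ 2) ≤ 2 * ∑' n : ℕ, ENNReal.ofReal (x - n) := by
  have key : ENNReal.ofReal (x ^ 2 / 2) ≤ ∑' n : ℕ, ENNReal.ofReal (x - n) := by
    calc ENNReal.ofReal (x ^ 2 / 2)
        ≤ ENNReal.ofReal (∑ n ∈ Finset.range (⌊x⌋₊ + 1), max (x - n) 0) :=
          ENNReal.ofReal_le_ofReal (pw_lower x hx)
      _ = ∑ n ∈ Finset.range (⌊x⌋₊ + 1), ENNReal.ofReal (x - n) := by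
          rw [ENNReal.ofReal_sum_of_nonneg (fun _ _ => le_max_right _ _)]
          exact Finset.sum_congr rfl fun n _ => (ofReal_eq_ofReal_max _).symm
      _ ≤ ∑' n : ℕ, ENNReal.ofReal (x - n) := ENNReal.sum_le_tsum _
  calc ENNReal.ofReal (x ^ 2) = ENNReal.ofReal (2 * (x ^ 2 / 2)) := by ring_nf
    _ = ENNReal.ofReal 2 * ENNReal.ofReal (x ^ 2 / 2) := ENNReal.ofReal_mul (by norm_num)
    _ ≤ 2 * ∑' n : ℕ, ENNReal.ofReal (x - n) := by
        rw [ENNReal.ofReal_ofNat]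
        exact mul_le_mul_right key _

lemma count_lt (x : ℝ) (hx : 0 ≤ x) (F : Finset ℕ) :
    ∑ n ∈ F, (if (n : ℝ) < x then (1 : ℝ≥0∞) else 0) ≤ ENNReal.ofReal x + 1 := by
  classical
  have h1 : ∑ n ∈ F, (if (n : ℝ) < x then (1 : ℝ≥0∞) else 0)
      = (F.filter (fun n : ℕ => (n : ℝ) < x)).card := by
    rw [Finset.sum_ite, Finset.sum_const_zero, Finset.sum_const, add_zero, nsmul_eq_mul, mul_one]
  have h2 : F.filter (fun n : ℕ => (n : ℝ) < x) ⊆ Finset.range (⌊x⌋₊ + 1) := by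
    intro n hn
    simp only [Finset.mem_filter] at hn
    simp only [Finset.mem_range, Nat.lt_succ_iff]
    exact Nat.le_floor hn.2.le
  have h3 : ((F.filter (fun n : ℕ => (n : ℝ) < x)).card : ℝ≥0∞) ≤ (⌊x⌋₊ + 1 : ℕ) := by
    exact_mod_cast Nat.cast_le.2 (Finset.card_le_card h2 |>.trans_eq (Finset.card_range _))
  rw [h1]
  refine h3.trans ?_
  push_cast
  rw [← ENNReal.ofReal_natCast ⌊x⌋₊]
  exact add_le_add_left (ENNReal.ofReal_le_ofReal (Nat.floor_le hx)) 1

lemma indep_real_ineq (F : Finset ℕ) (q : ℕ → ℝ) (h0 : ∀ n ∈ F, 0 ≤ q n)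
    (h1 : ∀ n ∈ F, q n ≤ 1) (M u : ℝ) (hu0 : 0 ≤ u) (hsM : ∑ n ∈ F, q n ≤ M)
    (hu : 1 - ∏ n ∈ F, (1 - q n) ≤ u) :
    ∑ n ∈ F, q n ≤ (1 + M) * u := by
  set s := ∑ n ∈ F, q n with hs
  have hs0 : 0 ≤ s := Finset.sum_nonneg h0
  have hprod : ∏ n ∈ F, (1 - q n) ≤ Real.exp (-s) := by
    calc ∏ n ∈ F, (1 - q n) ≤ ∏ n ∈ F, Real.exp (-q n) :=
          Finset.prod_le_prod (fun n hn => by linarith [h1 n hn])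
            (fun n hn => by linarith [Real.add_one_le_exp (-q n)])
      _ = Real.exp (∑ n ∈ F, -q n) := (Real.exp_sum F _).symm
      _ = Real.exp (-s) := by rw [← Finset.sum_neg_distrib]
  have hexp : Real.exp (-s) ≤ 1 / (1 + s) := by
    rw [Real.exp_neg, one_div]
    exact inv_anti₀ (by linarith) (by linarith [Real.add_one_le_exp s])
  have h2 : s / (1 + s) ≤ u := by
    have hpos : (0:ℝ) < 1 + s := by linarith
    have : s / (1 + s) = 1 - 1 / (1 + s) := by field_simp; ring
    rw [this]
    linarith
  have hpos : (0:ℝ) < 1 + s := by linarith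
  rw [div_le_iff₀ hpos] at h2
  calc s ≤ u * (1 + s) := h2
    _ ≤ u * (1 + M) := by nlinarith
    _ = (1 + M) * u := mul_comm _ _

section Main
variable {Ω : Type*} [MeasurableSpace Ω] (μ : Measure Ω) [IsProbabilityMeasure μ]
  (X : ℕ → Ω → ℝ)

lemma ident_lintegral (hmeas : ∀ n, Measurable (X n)) (hident : ∀ n, μ.map (X n) = μ.map (X 0))
    (n : ℕ) (g : ℝ → ℝ≥0∞) (hg : Measurable g) :
    ∫⁻ ω, g (X n ω) ∂μ = ∫⁻ ω, g (X 0 ω) ∂μ := by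
  rw [← lintegral_map hg (hmeas n), hident n, lintegral_map hg (hmeas 0)]

lemma ident_measure (hmeas : ∀ n, Measurable (X n)) (hident : ∀ n, μ.map (X n) = μ.map (X 0))
    (n : ℕ) (s : Set ℝ) (hs : MeasurableSet s) :
    μ (X n ⁻¹' s) = μ (X 0 ⁻¹' s) := by
  rw [← Measure.map_apply (hmeas n) hs, hident n, Measure.map_apply (hmeas 0) hs]

lemma tail_sum_le (hmeas : ∀ n, Measurable (X n)) (hpos0 : ∀ ω, 0 ≤ X 0 ω) :
    ∑' n : ℕ, μ {ω | (n : ℝ) < X 0 ω} ≤ ∫⁻ ω, ENNReal.ofReal (X 0 ω) ∂μ + 1 := by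
  rw [ENNReal.tsum_eq_iSup_sum]
  refine iSup_le fun F => ?_
  have hsm : ∀ n : ℕ, MeasurableSet {ω | (n : ℝ) < X 0 ω} :=
    fun n => measurableSet_lt measurable_const (hmeas 0)
  have h1 : ∀ n ∈ F, μ {ω | (n:ℝ) < X 0 ω}
      = ∫⁻ ω, ({ω | (n:ℝ) < X 0 ω}).indicator (1 : Ω → ℝ≥0∞) ω ∂μ :=
    fun n _ => (lintegral_indicator_one (hsm n)).symm
  rw [Finset.sum_congr rfl h1, ← lintegral_finset_sum _
    (fun n _ => (measurable_one.indicator (hsm n)))]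
  have h2 : ∫⁻ ω, ∑ n ∈ F, ({ω | (n:ℝ) < X 0 ω}).indicator (1 : Ω → ℝ≥0∞) ω ∂μ
      ≤ ∫⁻ ω, (ENNReal.ofReal (X 0 ω) + 1) ∂μ := by
    refine lintegral_mono fun ω => ?_
    refine le_trans (le_of_eq (Finset.sum_congr rfl fun n _ => ?_))
      (count_lt (X 0 ω) (hpos0 ω) F)
    simp [Set.indicator_apply]
  refine h2.trans ?_
  rw [lintegral_add_right _ measurable_const, lintegral_const, measure_univ, mul_one]

lemma ae_bddAbove (hmeas : ∀ n, Measurable (X n)) (hident : ∀ n, μ.map (X n) = μ.map (X 0))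
    (hfin : ∫⁻ ω, ENNReal.ofReal (X 0 ω) ∂μ ≠ ∞) (hpos0 : ∀ ω, 0 ≤ X 0 ω) :
    ∀ᵐ ω ∂μ, BddAbove (Set.range fun n : ℕ => X n ω - n) := by
  have hssum : ∑' n : ℕ, μ {ω | (n : ℝ) < X n ω} ≠ ∞ := by
    have he : ∀ n : ℕ, μ {ω | (n:ℝ) < X n ω} = μ {ω | (n:ℝ) < X 0 ω} := by
      intro n
      have h : {ω | (n:ℝ) < X n ω} = X n ⁻¹' (Ioi (n:ℝ)) := rfl
      have h0 : {ω | (n:ℝ) < X 0 ω} = X 0 ⁻¹' (Ioi (n:ℝ)) := rfl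
      rw [h, h0, ident_measure μ X hmeas hident n _ measurableSet_Ioi]
    rw [tsum_congr he]
    exact ne_top_of_le_ne_top (by simp [hfin, ENNReal.add_ne_top])
      (tail_sum_le μ X hmeas hpos0)
  filter_upwards [ae_eventually_notMem hssum] with ω hω
  rw [Filter.eventually_atTop] at hω
  obtain ⟨N, hN⟩ := hω
  refine ⟨max 0 (∑ k ∈ Finset.range N, |X k ω - k|), ?_⟩
  rintro y ⟨n, rfl⟩
  rcases lt_or_ge n N with h | h
  · calc X n ω - n ≤ |X n ω - n| := le_abs_self _
      _ ≤ ∑ k ∈ Finset.range N, |X k ω - k| :=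
        Finset.single_le_sum (f := fun k : ℕ => |X k ω - (k:ℝ)|)
          (fun k _ => abs_nonneg _) (Finset.mem_range.2 h)
      _ ≤ _ := le_max_right _ _
  · have h2 : ¬ (n:ℝ) < X n ω := hN n h
    push_neg at h2
    have h3 : X n ω - (n:ℝ) ≤ 0 := by linarith
    exact le_trans h3 (le_max_left _ _)

end Main


lemma ofReal_ciSup_le_tsum (f : ℕ → ℝ) :
    ENNReal.ofReal (⨆ n, f n) ≤ ∑' n, ENNReal.ofReal (f n) := by
  by_cases hb : BddAbove (Set.range f)
  · by_cases hS : ∑' n, ENNReal.ofReal (f n) = ∞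
    · simp [hS]
    · refine ENNReal.ofReal_le_of_le_toReal (ciSup_le fun n => ?_)
      have h1 : f n ≤ (ENNReal.ofReal (f n)).toReal := by
        rcases le_total (f n) 0 with h | h
        · exact le_trans h ENNReal.toReal_nonneg
        · rw [ENNReal.toReal_ofReal h]
      exact h1.trans (ENNReal.toReal_mono hS (ENNReal.le_tsum n))
  · rw [Real.iSup_of_not_bddAbove hb, ENNReal.ofReal_zero]
    exact zero_le

lemma Y_nonneg {Ω : Type*} (X : ℕ → Ω → ℝ) (hpos0 : ∀ ω, 0 ≤ X 0 ω) (ω : Ω) :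
    0 ≤ ⨆ n : ℕ, (X n ω - n) := by
  by_cases hb : BddAbove (Set.range fun n : ℕ => X n ω - n)
  · refine le_trans ?_ (le_ciSup hb 0)
    simpa using hpos0 ω
  · rw [Real.iSup_of_not_bddAbove hb]

lemma Z_measurable {Ω : Type*} [MeasurableSpace Ω] (X : ℕ → Ω → ℝ)
    (hmeas : ∀ n, Measurable (X n)) :
    Measurable fun ω => (⨆ n : ℕ, ENNReal.ofReal (X n ω - n)).toReal :=
  (Measurable.iSup fun n => ((hmeas n).sub measurable_const).ennreal_ofReal).ennreal_toReal

lemma Y_ae_eq_Z {Ω : Type*} [MeasurableSpace Ω] (μ : Measure Ω) (X : ℕ → Ω → ℝ)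
    (hpos0 : ∀ ω, 0 ≤ X 0 ω)
    (hbdd : ∀ᵐ ω ∂μ, BddAbove (Set.range fun n : ℕ => X n ω - n)) :
    (fun ω => ⨆ n : ℕ, (X n ω - n)) =ᵐ[μ]
      fun ω => (⨆ n : ℕ, ENNReal.ofReal (X n ω - n)).toReal := by
  filter_upwards [hbdd] with ω hb
  have h := Monotone.map_ciSup_of_continuousAt (f := ENNReal.ofReal)
    (g := fun n : ℕ => X n ω - n) ENNReal.continuous_ofReal.continuousAt
    (fun a b hab => ENNReal.ofReal_le_ofReal hab) hb
  rw [← h, ENNReal.toReal_ofReal (Y_nonneg X hpos0 ω)]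

lemma per_t {Ω : Type*} [MeasurableSpace Ω] (μ : Measure Ω) [IsProbabilityMeasure μ]
    (X : ℕ → Ω → ℝ) (hmeas : ∀ n, Measurable (X n))
    (hindep : iIndepFun X μ)
    (hident : ∀ n, μ.map (X n) = μ.map (X 0))
    (hpos0 : ∀ ω, 0 ≤ X 0 ω)
    (hbdd : ∀ᵐ ω ∂μ, BddAbove (Set.range fun n : ℕ => X n ω - n))
    (Mr : ℝ) (hMr : ∫⁻ ω, ENNReal.ofReal (X 0 ω) ∂μ + 1 ≤ ENNReal.ofReal Mr)
    (t : ℝ) (ht : 0 < t) :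
    ∑' n : ℕ, μ {ω | (n : ℝ) + t < X 0 ω}
      ≤ ENNReal.ofReal (1 + Mr) * μ {ω | t < ⨆ n : ℕ, (X n ω - n)} := by
  have hMr0 : 0 ≤ Mr := by
    by_contra h
    push_neg at h
    rw [ENNReal.ofReal_eq_zero.2 h.le] at hMr
    have h2 : (1:ℝ≥0∞) ≤ 0 := le_trans le_add_self hMr
    simp at h2
  have hfinmeas : ∀ s : Set Ω, μ s ≠ ∞ := fun s => (measure_lt_top μ s).ne
  rw [ENNReal.tsum_eq_iSup_sum]
  refine iSup_le fun F => ?_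
  set u : ℝ≥0∞ := μ {ω | t < ⨆ n : ℕ, (X n ω - n)} with hu
  set q : ℕ → ℝ := fun n => (μ {ω | (n:ℝ) + t < X 0 ω}).toReal with hq
  have hq0 : ∀ n ∈ F, 0 ≤ q n := fun n _ => ENNReal.toReal_nonneg
  have hq1 : ∀ n ∈ F, q n ≤ 1 := by
    intro n _
    rw [hq]
    have h := ENNReal.toReal_mono ENNReal.one_ne_top
      (prob_le_one (μ := μ) (s := {ω | (n:ℝ) + t < X 0 ω}))
    simpa using h
  have hsum_le : ∑ n ∈ F, q n ≤ Mr := by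
    have h1 : ∑ n ∈ F, μ {ω | (n:ℝ) + t < X 0 ω} ≤ ENNReal.ofReal Mr := by
      calc ∑ n ∈ F, μ {ω | (n:ℝ) + t < X 0 ω}
          ≤ ∑ n ∈ F, μ {ω | (n:ℝ) < X 0 ω} := Finset.sum_le_sum fun n _ =>
            measure_mono (fun ω h => by simp only [Set.mem_setOf_eq] at *; linarith)
        _ ≤ ∑' n : ℕ, μ {ω | (n:ℝ) < X 0 ω} := ENNReal.sum_le_tsum F
        _ ≤ _ := (tail_sum_le μ X hmeas hpos0).trans hMr
    have h2 := ENNReal.toReal_mono ENNReal.ofReal_ne_top h1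
    rw [ENNReal.toReal_sum (fun n _ => hfinmeas _), ENNReal.toReal_ofReal hMr0] at h2
    exact h2
  have hprod_eq : μ (⋂ n ∈ F, X n ⁻¹' Iic ((n:ℝ) + t))
      = ∏ n ∈ F, μ (X n ⁻¹' Iic ((n:ℝ) + t)) :=
    hindep.measure_inter_preimage_eq_mul F (fun i _ => measurableSet_Iic)
  set U : Set Ω := ⋃ n ∈ F, X n ⁻¹' Ioi ((n:ℝ) + t) with hUdef
  have hUc : U = (⋂ n ∈ F, X n ⁻¹' Iic ((n:ℝ)+t))ᶜ := by
    rw [Set.compl_iInter₂]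
    refine Set.iUnion₂_congr fun n _ => ?_
    rw [← Set.preimage_compl, Set.compl_Iic]
  have hImeas : MeasurableSet (⋂ n ∈ F, X n ⁻¹' Iic ((n:ℝ)+t)) :=
    MeasurableSet.biInter F.countable_toSet fun n _ => (hmeas n) measurableSet_Iic
  have hUmeas : μ U = 1 - μ (⋂ n ∈ F, X n ⁻¹' Iic ((n:ℝ)+t)) := by
    rw [hUc, measure_compl hImeas (hfinmeas _), measure_univ]
  have hfac : ∀ n, μ (X n ⁻¹' Iic ((n:ℝ)+t)) = 1 - μ {ω | (n:ℝ)+t < X 0 ω} := by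
    intro n
    have h : X n ⁻¹' Iic ((n:ℝ)+t) = (X n ⁻¹' Ioi ((n:ℝ)+t))ᶜ := by
      rw [← Set.preimage_compl, Set.compl_Ioi]
    rw [h, measure_compl ((hmeas n) measurableSet_Ioi) (hfinmeas _), measure_univ,
      ident_measure μ X hmeas hident n _ measurableSet_Ioi]
    rfl
  have hq_lt : ∀ n, μ {ω | (n:ℝ)+t < X 0 ω} ≤ 1 := fun n => prob_le_one
  have hfac' : ∀ n ∈ F, (μ (X n ⁻¹' Iic ((n:ℝ)+t))).toReal = 1 - q n := by
    intro n _
    rw [hfac n, ENNReal.toReal_sub_of_le (hq_lt n) ENNReal.one_ne_top]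
    simp [hq]
  have hUsub : μ U ≤ u := by
    refine measure_mono_ae ?_
    filter_upwards [hbdd] with ω hb hω
    have hω' : ω ∈ (⋃ n ∈ F, X n ⁻¹' Ioi ((n:ℝ) + t)) := hω
    rw [Set.mem_iUnion₂] at hω'
    obtain ⟨n, _, hn⟩ := hω'
    rw [Set.mem_preimage, Set.mem_Ioi] at hn
    have h2 : t < X n ω - n := by linarith
    show t < ⨆ n : ℕ, (X n ω - n)
    exact lt_of_lt_of_le h2 (le_ciSup hb n)
  have hprodI : μ (⋂ n ∈ F, X n ⁻¹' Iic ((n:ℝ)+t)) ≤ 1 := prob_le_one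
  have hUreal : 1 - ∏ n ∈ F, (1 - q n) ≤ u.toReal := by
    have h1 : (μ U).toReal = 1 - ∏ n ∈ F, (1 - q n) := by
      rw [hUmeas, ENNReal.toReal_sub_of_le hprodI ENNReal.one_ne_top, hprod_eq,
        ENNReal.toReal_prod, Finset.prod_congr rfl hfac']
      simp
    rw [← h1]
    exact ENNReal.toReal_mono (hfinmeas _) hUsub
  have key := indep_real_ineq F q hq0 hq1 Mr u.toReal ENNReal.toReal_nonneg hsum_le hUreal
  calc ∑ n ∈ F, μ {ω | (n:ℝ) + t < X 0 ω} = ENNReal.ofReal (∑ n ∈ F, q n) := by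
        rw [ENNReal.ofReal_sum_of_nonneg hq0]
        exact Finset.sum_congr rfl fun n _ => (ENNReal.ofReal_toReal (hfinmeas _)).symm
    _ ≤ ENNReal.ofReal ((1 + Mr) * u.toReal) := ENNReal.ofReal_le_ofReal key
    _ = ENNReal.ofReal (1+Mr) * ENNReal.ofReal u.toReal := ENNReal.ofReal_mul (by linarith)
    _ = ENNReal.ofReal (1+Mr) * u := by rw [ENNReal.ofReal_toReal (hfinmeas _)]

lemma dir1 {Ω : Type*} [MeasurableSpace Ω] (μ : Measure Ω) [IsProbabilityMeasure μ]
    (X : ℕ → Ω → ℝ) (hmeas : ∀ n, Measurable (X n))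
    (hident : ∀ n, μ.map (X n) = μ.map (X 0))
    (hpos : ∀ n ω, 0 ≤ X n ω) (hint : Integrable (X 0) μ)
    (hsq : Integrable (fun ω => (X 0 ω) ^ 2) μ) :
    Integrable (fun ω => ⨆ n : ℕ, (X n ω - n)) μ := by
  have hpos0 := hpos 0
  have hfin : ∫⁻ ω, ENNReal.ofReal (X 0 ω) ∂μ ≠ ∞ := by
    have h := hint.hasFiniteIntegral
    rw [hasFiniteIntegral_iff_ofReal (ae_of_all _ hpos0)] at h
    exact h.ne
  have hsqfin : ∫⁻ ω, ENNReal.ofReal ((X 0 ω) ^ 2) ∂μ ≠ ∞ := by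
    have h := hsq.hasFiniteIntegral
    rw [hasFiniteIntegral_iff_ofReal (ae_of_all _ (fun ω => sq_nonneg _))] at h
    exact h.ne
  have hbdd := ae_bddAbove μ X hmeas hident hfin hpos0
  have hZ : AEMeasurable (fun ω => ⨆ n : ℕ, (X n ω - n)) μ :=
    (Z_measurable X hmeas).aemeasurable.congr (Y_ae_eq_Z μ X hpos0 hbdd).symm
  refine ⟨hZ.aestronglyMeasurable, ?_⟩
  rw [hasFiniteIntegral_iff_ofReal (ae_of_all _ (Y_nonneg X hpos0))]
  calc ∫⁻ ω, ENNReal.ofReal (⨆ n : ℕ, (X n ω - n)) ∂μ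
      ≤ ∫⁻ ω, ∑' n : ℕ, ENNReal.ofReal (X n ω - n) ∂μ :=
        lintegral_mono fun ω => ofReal_ciSup_le_tsum _
    _ = ∑' n : ℕ, ∫⁻ ω, ENNReal.ofReal (X n ω - n) ∂μ :=
        lintegral_tsum fun n => (((hmeas n).sub measurable_const).ennreal_ofReal).aemeasurable
    _ = ∑' n : ℕ, ∫⁻ ω, ENNReal.ofReal (X 0 ω - n) ∂μ :=
        tsum_congr fun n => ident_lintegral μ X hmeas hident n
          (fun x => ENNReal.ofReal (x - n))
          ((measurable_id.sub measurable_const).ennreal_ofReal)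
    _ = ∫⁻ ω, ∑' n : ℕ, ENNReal.ofReal (X 0 ω - n) ∂μ :=
        (lintegral_tsum fun n =>
          (((hmeas 0).sub measurable_const).ennreal_ofReal).aemeasurable).symm
    _ ≤ ∫⁻ ω, (ENNReal.ofReal ((X 0 ω) ^ 2) + ENNReal.ofReal (X 0 ω)) ∂μ :=
        lintegral_mono fun ω => enn_upper (X 0 ω) (hpos0 ω)
    _ = ∫⁻ ω, ENNReal.ofReal ((X 0 ω) ^ 2) ∂μ + ∫⁻ ω, ENNReal.ofReal (X 0 ω) ∂μ :=
        lintegral_add_left ((hmeas 0).pow_const 2).ennreal_ofReal _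
    _ < ∞ := ENNReal.add_lt_top.2 ⟨hsqfin.lt_top, hfin.lt_top⟩

lemma dir2 {Ω : Type*} [MeasurableSpace Ω] (μ : Measure Ω) [IsProbabilityMeasure μ]
    (X : ℕ → Ω → ℝ) (hmeas : ∀ n, Measurable (X n))
    (hindep : iIndepFun X μ)
    (hident : ∀ n, μ.map (X n) = μ.map (X 0))
    (hpos : ∀ n ω, 0 ≤ X n ω) (hint : Integrable (X 0) μ)
    (hY : Integrable (fun ω => ⨆ n : ℕ, (X n ω - n)) μ) :
    Integrable (fun ω => (X 0 ω) ^ 2) μ := by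
  have hpos0 := hpos 0
  have hfin : ∫⁻ ω, ENNReal.ofReal (X 0 ω) ∂μ ≠ ∞ := by
    have h := hint.hasFiniteIntegral
    rw [hasFiniteIntegral_iff_ofReal (ae_of_all _ hpos0)] at h
    exact h.ne
  have hbdd := ae_bddAbove μ X hmeas hident hfin hpos0
  have hYmeas : AEMeasurable (fun ω => ⨆ n : ℕ, (X n ω - n)) μ :=
    (Z_measurable X hmeas).aemeasurable.congr (Y_ae_eq_Z μ X hpos0 hbdd).symm
  have hYfin : ∫⁻ ω, ENNReal.ofReal (⨆ n : ℕ, (X n ω - n)) ∂μ ≠ ∞ := by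
    have h := hY.hasFiniteIntegral
    rw [hasFiniteIntegral_iff_ofReal (ae_of_all _ (Y_nonneg X hpos0))] at h
    exact h.ne
  set Mr : ℝ := (∫⁻ ω, ENNReal.ofReal (X 0 ω) ∂μ).toReal + 1 with hMrdef
  have hMr : ∫⁻ ω, ENNReal.ofReal (X 0 ω) ∂μ + 1 ≤ ENNReal.ofReal Mr := by
    rw [hMrdef, ENNReal.ofReal_add ENNReal.toReal_nonneg zero_le_one,
      ENNReal.ofReal_toReal hfin, ENNReal.ofReal_one]
  -- layer cake for each X 0 - n
  have hlayer : ∀ n : ℕ, ∫⁻ ω, ENNReal.ofReal (X 0 ω - n) ∂μ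
      = ∫⁻ t in Ioi (0:ℝ), μ {ω | (n:ℝ) + t < X 0 ω} := by
    intro n
    have h1 : ∫⁻ ω, ENNReal.ofReal (X 0 ω - n) ∂μ
        = ∫⁻ ω, ENNReal.ofReal (max (X 0 ω - n) 0) ∂μ :=
      lintegral_congr fun ω => ofReal_eq_ofReal_max _
    rw [h1, lintegral_eq_lintegral_meas_lt (f := fun ω => max (X 0 ω - n) 0) μ
      (ae_of_all _ fun ω => le_max_right _ _)
      (((hmeas 0).sub measurable_const).max measurable_const).aemeasurable]
    refine setLIntegral_congr_fun measurableSet_Ioi (fun t ht => ?_)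
    congr 1
    ext ω
    simp only [Set.mem_setOf_eq, lt_max_iff]
    constructor
    · rintro (h | h)
      · linarith
      · exact absurd h (not_lt.2 ht.le)
    · intro h; left; linarith
  -- layer cake for Y
  have hlayerY : ∫⁻ ω, ENNReal.ofReal (⨆ n : ℕ, (X n ω - n)) ∂μ
      = ∫⁻ t in Ioi (0:ℝ), μ {ω | t < ⨆ n : ℕ, (X n ω - n)} :=
    lintegral_eq_lintegral_meas_lt μ (ae_of_all _ (Y_nonneg X hpos0)) hYmeas
  have htails_meas : ∀ n : ℕ, Measurable fun t : ℝ => μ {ω | (n:ℝ) + t < X 0 ω} := by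
    intro n
    refine Antitone.measurable fun t t' htt' => ?_
    exact measure_mono fun ω h => by simp only [Set.mem_setOf_eq] at *; linarith
  have hsum : ∑' n : ℕ, ∫⁻ ω, ENNReal.ofReal (X 0 ω - n) ∂μ
      = ∫⁻ t in Ioi (0:ℝ), ∑' n : ℕ, μ {ω | (n:ℝ) + t < X 0 ω} := by
    rw [tsum_congr hlayer]
    exact (lintegral_tsum fun n => (htails_meas n).aemeasurable).symm
  have hbound : ∫⁻ t in Ioi (0:ℝ), ∑' n : ℕ, μ {ω | (n:ℝ) + t < X 0 ω}
      ≤ ENNReal.ofReal (1 + Mr) * ∫⁻ ω, ENNReal.ofReal (⨆ n : ℕ, (X n ω - n)) ∂μ := by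
    rw [hlayerY, ← lintegral_const_mul' _ _ ENNReal.ofReal_ne_top]
    refine lintegral_mono_ae ?_
    rw [ae_restrict_iff' measurableSet_Ioi]
    exact ae_of_all _ fun t ht => per_t μ X hmeas hindep hident hpos0 hbdd Mr hMr t ht
  have hSfin : ∑' n : ℕ, ∫⁻ ω, ENNReal.ofReal (X 0 ω - n) ∂μ ≠ ∞ := by
    rw [hsum]
    exact ne_top_of_le_ne_top
      (ENNReal.mul_ne_top ENNReal.ofReal_ne_top hYfin) hbound
  have hmain : ∫⁻ ω, ENNReal.ofReal ((X 0 ω) ^ 2) ∂μ ≠ ∞ := by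
    have h1 : ∫⁻ ω, ENNReal.ofReal ((X 0 ω) ^ 2) ∂μ
        ≤ 2 * ∑' n : ℕ, ∫⁻ ω, ENNReal.ofReal (X 0 ω - n) ∂μ := by
      calc ∫⁻ ω, ENNReal.ofReal ((X 0 ω) ^ 2) ∂μ
          ≤ ∫⁻ ω, 2 * ∑' n : ℕ, ENNReal.ofReal (X 0 ω - n) ∂μ :=
            lintegral_mono fun ω => enn_lower (X 0 ω) (hpos0 ω)
        _ = 2 * ∫⁻ ω, ∑' n : ℕ, ENNReal.ofReal (X 0 ω - n) ∂μ :=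
            lintegral_const_mul' _ _ (by simp)
        _ = 2 * ∑' n : ℕ, ∫⁻ ω, ENNReal.ofReal (X 0 ω - n) ∂μ := by
            rw [lintegral_tsum (f := fun (n : ℕ) ω => ENNReal.ofReal (X 0 ω - n)) fun n =>
              (((hmeas 0).sub measurable_const).ennreal_ofReal).aemeasurable]
    exact ne_top_of_le_ne_top (ENNReal.mul_ne_top (by simp) hSfin) h1
  refine ⟨((hmeas 0).pow_const 2).aestronglyMeasurable, ?_⟩
  rw [hasFiniteIntegral_iff_ofReal (ae_of_all _ fun ω => sq_nonneg _)]
  exact hmain.lt_top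

theorem integrable_iSup_sub_iff_secondMoment {Ω : Type*} [MeasurableSpace Ω]
    (μ : Measure Ω) [IsProbabilityMeasure μ] (X : ℕ → Ω → ℝ)
    (hmeas : ∀ n, Measurable (X n))
    (hindep : iIndepFun X μ)
    (hident : ∀ n, μ.map (X n) = μ.map (X 0))
    (hpos : ∀ n ω, 0 ≤ X n ω)
    (hint : Integrable (X 0) μ) :
    Integrable (fun ω => ⨆ n : ℕ, (X n ω - n)) μ ↔
      Integrable (fun ω => (X 0 ω) ^ 2) μ := by
  constructor
  · exact dir2 μ X hmeas hindep hident hpos hint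
  · exact dir1 μ X hmeas hident hpos hint
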